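/- The identity is the only order-isomorphism of (Δⁿ, ⊑) that fixes every maximal element and preserves Shannon entropy μ(x) = −∑ xᵢ log xᵢ. -/

import Mathlib

open Finset

/-- Δⁿ: probability distributions on {1,…,n}. -/
def IsDist {n : ℕ} (x : Fin n → ℝ) : Prop :=
  (∀ i, 0 ≤ x i) ∧ ∑ i, x i = 1

/-- The adjacent-index inequalities  xᵢ yᵢ₊₁ ≤ xᵢ₊₁ yᵢ  for all i ∈ {1,…,n-1}. -/
def AdjLE {n : ℕ} (x y : Fin n → ℝ) : Prop :=
  ∀ i : ℕ, ∀ h : i + 1 < n,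
    x ⟨i, Nat.lt_of_succ_lt h⟩ * y ⟨i + 1, h⟩ ≤ x ⟨i + 1, h⟩ * y ⟨i, Nat.lt_of_succ_lt h⟩

/-- The Bayesian order on Δⁿ: x ⊑ y iff some permutation σ monotonizes both
(x∘σ, y∘σ decreasing, i.e. in Λⁿ) and the adjacent inequalities hold. -/
def BayesLE {n : ℕ} (x y : Fin n → ℝ) : Prop :=
  ∃ σ : Equiv.Perm (Fin n),
    Antitone (x ∘ σ) ∧ Antitone (y ∘ σ) ∧ AdjLE (x ∘ σ) (y ∘ σ)

/-- Shannon entropy μ(x) = −∑ xᵢ log xᵢ (with 0·log 0 = 0, since Real.log 0 = 0). -/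
noncomputable def shannonEntropy {n : ℕ} (x : Fin n → ℝ) : ℝ :=
  -∑ i, x i * Real.log (x i)

namespace Stmt17


variable {n : ℕ}

/-- canonical antitone sorting permutation -/
noncomputable def aperm (x : Fin n → ℝ) : Equiv.Perm (Fin n) :=
  Fin.revPerm.trans (Tuple.sort x)

lemma aperm_antitone (x : Fin n → ℝ) : Antitone (x ∘ aperm x) := by
  intro u v huv
  have h := Tuple.monotone_sort x
  simp only [Function.comp, aperm, Equiv.trans_apply, Fin.revPerm_apply]
  exact h (Fin.rev_le_rev.mpr huv)

lemma antitone_unique {x : Fin n → ℝ} {σ τ : Equiv.Perm (Fin n)}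
    (hσ : Antitone (x ∘ σ)) (hτ : Antitone (x ∘ τ)) : x ∘ σ = x ∘ τ := by
  have hσ' : Monotone (x ∘ (Fin.revPerm.trans σ)) := by
    intro u v huv
    exact hσ (Fin.rev_le_rev.mpr huv)
  have hτ' : Monotone (x ∘ (Fin.revPerm.trans τ)) := by
    intro u v huv
    exact hτ (Fin.rev_le_rev.mpr huv)
  have := Tuple.unique_monotone hσ' hτ'
  funext u
  have h2 := congrFun this (Fin.rev u)
  simpa [Function.comp, Fin.rev_rev] using h2

/-- sorted tuple extended to ℕ by zeros -/
noncomputable def nsort (x : Fin n → ℝ) : ℕ → ℝ :=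
  fun u => if h : u < n then (x ∘ aperm x) ⟨u, h⟩ else 0

lemma nsort_eq {x : Fin n → ℝ} {σ : Equiv.Perm (Fin n)} (hσ : Antitone (x ∘ σ))
    (u : Fin n) : x (σ u) = nsort x (u : ℕ) := by
  have := congrFun (antitone_unique hσ (aperm_antitone x)) u
  simp only [Function.comp] at this
  simp [nsort, u.isLt, this]

lemma nsort_apply (x : Fin n → ℝ) (i : Fin n) :
    x i = nsort x ((aperm x).symm i : ℕ) := by
  have := nsort_eq (aperm_antitone x) ((aperm x).symm i)
  simpa using this

lemma nsort_nonneg {x : Fin n → ℝ} (hx : ∀ i, 0 ≤ x i) (u : ℕ) : 0 ≤ nsort x u := by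
  unfold nsort; split
  · exact hx _
  · exact le_refl 0

lemma nsort_antitone {x : Fin n → ℝ} (hx : ∀ i, 0 ≤ x i) : Antitone (nsort x) := by
  intro u v huv
  unfold nsort
  by_cases hv : v < n
  · have hu : u < n := lt_of_le_of_lt huv hv
    simp only [dif_pos hu, dif_pos hv]
    exact aperm_antitone x (show (⟨u, hu⟩ : Fin n) ≤ ⟨v, hv⟩ from huv)
  · simp only [dif_neg hv]
    split
    · exact hx _
    · exact le_refl 0

/-- lower subsets of Fin n are initial segments -/
lemma lower_mem_iff {L : Finset (Fin n)}
    (hL : ∀ ⦃u v : Fin n⦄, u ≤ v → v ∈ L → u ∈ L) {u : Fin n} :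
    u ∈ L ↔ (u : ℕ) < L.card := by
  constructor
  · intro hu
    have hsub : Finset.Iic u ⊆ L := fun v hv => hL (Finset.mem_Iic.mp hv) hu
    have h1 := Finset.card_le_card hsub
    rw [Fin.card_Iic] at h1
    omega
  · intro hu
    by_contra hc
    have hsub : L ⊆ Finset.Iio u := by
      intro v hv
      rw [Finset.mem_Iio]
      rcases lt_or_ge v u with h | h
      · exact h
      · exact absurd (hL h hv) hc
    have h1 := Finset.card_le_card hsub
    rw [Fin.card_Iio] at h1
    omega

/-- number of entries greater than v -/
noncomputable def gtcard (x : Fin n → ℝ) (v : ℝ) : ℕ :=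
  (univ.filter (fun i => v < x i)).card

lemma gtcard_le (x : Fin n → ℝ) (v : ℝ) : gtcard x v ≤ n := by
  have := Finset.card_filter_le (univ : Finset (Fin n)) (fun i => v < x i)
  simpa [gtcard] using this

lemma slots_gt {x : Fin n → ℝ} {σ : Equiv.Perm (Fin n)} (hσ : Antitone (x ∘ σ))
    (v : ℝ) (u : Fin n) : v < x (σ u) ↔ (u : ℕ) < gtcard x v := by
  have hcard : (univ.filter (fun u => v < x (σ u))).card = gtcard x v := by
    apply Finset.card_equiv σ
    intro i
    simp [gtcard]
  have hlow : ∀ ⦃a b : Fin n⦄, a ≤ b → b ∈ (univ.filter (fun u => v < x (σ u))) →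
      a ∈ (univ.filter (fun u => v < x (σ u))) := by
    intro a b hab hb
    simp only [Finset.mem_filter, Finset.mem_univ, true_and] at hb ⊢
    exact lt_of_lt_of_le hb (hσ hab)
  have := lower_mem_iff hlow (u := u)
  simp only [Finset.mem_filter, Finset.mem_univ, true_and] at this
  rw [this, hcard]

lemma nsort_gt_iff {x : Fin n → ℝ} {v : ℝ} (hv : 0 ≤ v) (u : ℕ) :
    v < nsort x u ↔ u < gtcard x v := by
  by_cases hu : u < n
  · have := slots_gt (aperm_antitone x) v ⟨u, hu⟩
    rw [nsort]
    simpa [dif_pos hu] using this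
  · rw [nsort, dif_neg hu]
    constructor
    · intro h; linarith
    · intro h; exact absurd (lt_of_lt_of_le h (le_trans (gtcard_le x v) (le_of_not_gt hu))) (lt_irrefl u)

/-- support size -/
noncomputable def Ksupp (x : Fin n → ℝ) : ℕ := gtcard x 0

lemma nsort_pos_iff (x : Fin n → ℝ) (u : ℕ) : 0 < nsort x u ↔ u < Ksupp x :=
  nsort_gt_iff le_rfl u

lemma sum_nsort_g (x : Fin n → ℝ) (g : ℝ → ℝ) :
    ∑ i, g (x i) = ∑ u ∈ range n, g (nsort x u) := by
  rw [← Fin.sum_univ_eq_sum_range (fun u => g (nsort x u)) n]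
  rw [← Equiv.sum_comp (aperm x) (fun i => g (x i))]
  apply Finset.sum_congr rfl
  intro u _
  congr 1
  exact nsort_eq (aperm_antitone x) u



variable {n : ℕ}

lemma Ksupp_pos {x : Fin n → ℝ} (hx : IsDist x) : 0 < Ksupp x := by
  rw [Ksupp, gtcard, Finset.card_pos]
  by_contra hc
  rw [Finset.not_nonempty_iff_eq_empty, Finset.filter_eq_empty_iff] at hc
  have : ∀ i : Fin n, x i = 0 := fun i =>
    le_antisymm (le_of_not_gt (hc (Finset.mem_univ i))) (hx.1 i)
  have h1 := hx.2
  rw [Finset.sum_congr rfl (fun i _ => this i)] at h1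
  simp at h1

lemma Ksupp_le (x : Fin n → ℝ) : Ksupp x ≤ n := gtcard_le x 0

lemma nsort_zero_of_ge {x : Fin n → ℝ} (hx : ∀ i, 0 ≤ x i) {u : ℕ}
    (hu : Ksupp x ≤ u) : nsort x u = 0 := by
  have h1 := nsort_nonneg hx u
  have h2 : ¬ (0 < nsort x u) := by
    rw [nsort_pos_iff]; omega
  linarith

lemma sum_range_nsort {x : Fin n → ℝ} (hx : IsDist x) :
    ∑ u ∈ range (Ksupp x), nsort x u = 1 := by
  have h1 : ∑ u ∈ range n, nsort x u = 1 := by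
    rw [← sum_nsort_g x (fun t => t)]; exact hx.2
  rw [← h1]
  apply Finset.sum_subset
  · exact Finset.range_subset_range.mpr (Ksupp_le x)
  · intro u _ hu
    rw [Finset.mem_range, not_lt] at hu
    exact nsort_zero_of_ge hx.1 hu

/-- sorting putting a value-up-closed set S first -/
lemma sortset {z : Fin n → ℝ} {S : Finset (Fin n)}
    (hzS : ∀ i ∈ S, ∀ j ∉ S, z j ≤ z i) :
    ∃ σ : Equiv.Perm (Fin n), Antitone (z ∘ σ) ∧
      ∀ u : Fin n, (σ u ∈ S ↔ (u : ℕ) < S.card) := by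
  classical
  set w : Fin n → ℝ := fun i => z i + (if i ∈ S then 1 else 0) with hw_def
  set σ := aperm w with hσ_def
  have hw : Antitone (w ∘ σ) := aperm_antitone w
  have hlow : ∀ ⦃u v : Fin n⦄, u ≤ v → σ v ∈ S → σ u ∈ S := by
    intro u v huv hv
    by_contra hu
    have h1 : w (σ v) ≤ w (σ u) := hw huv
    have h2 : z (σ u) ≤ z (σ v) := hzS _ hv _ hu
    simp only [hw_def, if_pos hv, if_neg hu, add_zero] at h1
    linarith
  have hmem : ∀ u : Fin n, (σ u ∈ S ↔ (u : ℕ) < S.card) := by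
    intro u
    have hcard : (univ.filter (fun u => σ u ∈ S)).card = S.card := by
      apply Finset.card_equiv σ; intro i; simp
    have := lower_mem_iff (L := univ.filter (fun u => σ u ∈ S))
      (by intro a b hab hb
          simp only [Finset.mem_filter, Finset.mem_univ, true_and] at hb ⊢
          exact hlow hab hb) (u := u)
    simp only [Finset.mem_filter, Finset.mem_univ, true_and] at this
    rw [this, hcard]
  refine ⟨σ, ?_, hmem⟩
  intro u v huv
  by_cases hv : σ v ∈ S
  · have hu : σ u ∈ S := hlow huv hv
    have h1 : w (σ v) ≤ w (σ u) := hw huv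
    simp only [hw_def, if_pos hv, if_pos hu] at h1
    simpa using h1
  · by_cases hu : σ u ∈ S
    · exact hzS _ hu _ hv
    · have h1 : w (σ v) ≤ w (σ u) := hw huv
      simp only [hw_def, if_neg hv, if_neg hu, add_zero] at h1
      exact h1

/-- conditioning on a set -/
noncomputable def condS (z : Fin n → ℝ) (T : Finset (Fin n)) : Fin n → ℝ :=
  fun i => if i ∈ T then z i / (∑ j ∈ T, z j) else 0

section condS

variable {z : Fin n → ℝ} {T : Finset (Fin n)}

lemma condS_sum_pos (hT : ∀ i ∈ T, 0 < z i) (hne : T.Nonempty) :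
    0 < ∑ j ∈ T, z j := Finset.sum_pos hT hne

lemma condS_nonneg (hT : ∀ i ∈ T, 0 < z i) (hne : T.Nonempty) (i : Fin n) :
    0 ≤ condS z T i := by
  unfold condS; split
  · exact le_of_lt (div_pos (hT _ (by assumption)) (condS_sum_pos hT hne))
  · exact le_refl 0

lemma condS_isDist (hT : ∀ i ∈ T, 0 < z i) (hne : T.Nonempty) :
    IsDist (condS z T) := by
  refine ⟨condS_nonneg hT hne, ?_⟩
  unfold condS
  classical
  rw [Finset.sum_ite_mem, Finset.univ_inter, ← Finset.sum_div]
  exact div_self (ne_of_gt (condS_sum_pos hT hne))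

lemma condS_pos_iff (hT : ∀ i ∈ T, 0 < z i) (hne : T.Nonempty) (i : Fin n) :
    0 < condS z T i ↔ i ∈ T := by
  unfold condS
  constructor
  · intro h; by_contra hc; rw [if_neg hc] at h; linarith
  · intro h; rw [if_pos h]; exact div_pos (hT _ h) (condS_sum_pos hT hne)

lemma Ksupp_condS (hT : ∀ i ∈ T, 0 < z i) (hne : T.Nonempty) :
    Ksupp (condS z T) = T.card := by
  rw [Ksupp, gtcard]
  congr 1
  ext i
  simp only [Finset.mem_filter, Finset.mem_univ, true_and]
  exact condS_pos_iff hT hne i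

lemma nsort_condS (hz : ∀ i, 0 ≤ z i) (hzS : ∀ i ∈ T, ∀ j ∉ T, z j ≤ z i)
    (hT : ∀ i ∈ T, 0 < z i) (hne : T.Nonempty) (u : ℕ) :
    nsort (condS z T) u =
      if u < T.card then nsort z u / (∑ j ∈ T, z j) else 0 := by
  obtain ⟨σ, hσz, hσS⟩ := sortset hzS
  have hform : ∀ v : Fin n, (condS z T ∘ σ) v =
      if (v : ℕ) < T.card then nsort z v / (∑ j ∈ T, z j) else 0 := by
    intro v
    simp only [Function.comp, condS]
    by_cases hv : σ v ∈ T
    · rw [if_pos hv, if_pos ((hσS v).mp hv), nsort_eq hσz]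
    · rw [if_neg hv, if_neg (fun hc => hv ((hσS v).mpr hc))]
  have hanti : Antitone (condS z T ∘ σ) := by
    intro a b hab
    rw [hform a, hform b]
    by_cases hb : (b : ℕ) < T.card
    · have ha : (a : ℕ) < T.card := lt_of_le_of_lt (by exact_mod_cast hab) hb
      rw [if_pos ha, if_pos hb]
      exact (div_le_div_iff_of_pos_right (condS_sum_pos hT hne)).mpr
        (nsort_antitone hz (by exact_mod_cast hab))
    · rw [if_neg hb]
      split
      · exact div_nonneg (nsort_nonneg hz a) (le_of_lt (condS_sum_pos hT hne))
      · exact le_refl 0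
  by_cases hu : u < n
  · have h2 := nsort_eq hanti ⟨u, hu⟩
    rw [← h2]
    simpa using hform ⟨u, hu⟩
  · rw [nsort, dif_neg hu, if_neg]
    intro hc
    have := (Finset.card_le_card (Finset.subset_univ T))
    simp only [Finset.card_univ, Fintype.card_fin] at this
    omega

end condS

section bayes

variable {z y : Fin n → ℝ} {T : Finset (Fin n)}

/-- z is below its conditioning on a value-up-closed set -/
lemma bayesLE_condS (hz : ∀ i, 0 ≤ z i) (hzS : ∀ i ∈ T, ∀ j ∉ T, z j ≤ z i)
    (hT : ∀ i ∈ T, 0 < z i) (hne : T.Nonempty) :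
    BayesLE z (condS z T) := by
  obtain ⟨σ, hσz, hσS⟩ := sortset hzS
  set c := ∑ j ∈ T, z j with hc_def
  have hc : 0 < c := condS_sum_pos hT hne
  have hform : ∀ v : Fin n, (condS z T ∘ σ) v =
      if (v : ℕ) < T.card then z (σ v) / c else 0 := by
    intro v
    simp only [Function.comp, condS]
    by_cases hv : σ v ∈ T
    · rw [if_pos hv, if_pos ((hσS v).mp hv)]
    · rw [if_neg hv, if_neg (fun hcc => hv ((hσS v).mpr hcc))]
  refine ⟨σ, hσz, ?_, ?_⟩
  · intro a b hab
    rw [hform a, hform b]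
    by_cases hb : (b : ℕ) < T.card
    · have ha : (a : ℕ) < T.card := lt_of_le_of_lt (by exact_mod_cast hab) hb
      rw [if_pos ha, if_pos hb]
      exact (div_le_div_iff_of_pos_right hc).mpr (hσz hab)
    · rw [if_neg hb]
      split
      · exact div_nonneg (hz _) hc.le
      · exact le_refl 0
  · intro i hi
    set a : Fin n := ⟨i, Nat.lt_of_succ_lt hi⟩
    set b : Fin n := ⟨i + 1, hi⟩
    show z (σ a) * (condS z T ∘ σ) b ≤ z (σ b) * (condS z T ∘ σ) a
    rw [hform a, hform b]
    by_cases hb : (b : ℕ) < T.card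
    · have ha : (a : ℕ) < T.card := by simp only [a, b] at *; omega
      rw [if_pos ha, if_pos hb]
      ring_nf
      exact le_refl _
    · rw [if_neg hb]
      rw [mul_zero]
      split
      · exact mul_nonneg (hz _) (div_nonneg (hz _) hc.le)
      · exact mul_nonneg (hz _) (le_refl 0)

lemma sum_condS_range (hz : ∀ i, 0 ≤ z i) (hzS : ∀ i ∈ T, ∀ j ∉ T, z j ≤ z i) :
    ∑ j ∈ T, z j = ∑ u ∈ range T.card, nsort z u := by
  classical
  obtain ⟨σ, hσz, hσS⟩ := sortset hzS
  have h1 : ∑ j ∈ T, z j = ∑ j, if j ∈ T then z j else 0 := by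
    rw [Finset.sum_ite_mem, Finset.univ_inter]
  have h2 : ∑ j, (if j ∈ T then z j else 0)
      = ∑ u : Fin n, (if σ u ∈ T then z (σ u) else 0) :=
    (Equiv.sum_comp σ (fun j => if j ∈ T then z j else 0)).symm
  have h3 : ∀ u : Fin n, (if σ u ∈ T then z (σ u) else 0)
      = (if (u : ℕ) < T.card then nsort z (u : ℕ) else 0) := by
    intro u
    by_cases hu : σ u ∈ T
    · rw [if_pos hu, if_pos ((hσS u).mp hu), nsort_eq hσz]
    · rw [if_neg hu, if_neg (fun hc => hu ((hσS u).mpr hc))]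
  have h4 : ∑ u : Fin n, (if (u : ℕ) < T.card then nsort z (u : ℕ) else 0)
      = ∑ u ∈ range n, (if u < T.card then nsort z u else 0) :=
    Fin.sum_univ_eq_sum_range (fun u => if u < T.card then nsort z u else 0) n
  have hTn : T.card ≤ n := by
    have := Finset.card_le_card (Finset.subset_univ T)
    simpa using this
  have h5 : ∑ u ∈ range n, (if u < T.card then nsort z u else 0)
      = ∑ u ∈ range T.card, nsort z u := by
    rw [← Finset.sum_filter]
    congr 1
    ext u
    simp only [Finset.mem_filter, Finset.mem_range]
    omega
  rw [h1, h2, Finset.sum_congr rfl (fun u _ => h3 u), h4, h5]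

/-- extraction from a Bayesian comparison: common slots data -/
lemma extract (hzy : BayesLE z y) :
    (∀ i : Fin n, ∃ u : ℕ, u < n ∧ z i = nsort z u ∧ y i = nsort y u) ∧
    (∀ u : ℕ, u + 1 < n → nsort z u * nsort y (u + 1) ≤ nsort z (u + 1) * nsort y u) := by
  obtain ⟨σ, hσz, hσy, hadj⟩ := hzy
  constructor
  · intro i
    refine ⟨(σ.symm i : ℕ), (σ.symm i).isLt, ?_, ?_⟩
    · have := nsort_eq hσz (σ.symm i); simpa using this
    · have := nsort_eq hσy (σ.symm i); simpa using this
  · intro u hu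
    have h := hadj u hu
    have e1 := nsort_eq hσz (⟨u, Nat.lt_of_succ_lt hu⟩ : Fin n)
    have e2 := nsort_eq hσz (⟨u + 1, hu⟩ : Fin n)
    have e3 := nsort_eq hσy (⟨u, Nat.lt_of_succ_lt hu⟩ : Fin n)
    have e4 := nsort_eq hσy (⟨u + 1, hu⟩ : Fin n)
    simp only [Function.comp] at h
    rw [e1, e2, e3, e4] at h
    exact h

/-- cross-product equalities force equality of sorted distributions -/
lemma cross_eq {x y : Fin n → ℝ} (hx : IsDist x) (hy : IsDist y)
    (hcross : ∀ u : ℕ, nsort x u * nsort y (u + 1) = nsort x (u + 1) * nsort y u) :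
    ∀ u : ℕ, nsort x u = nsort y u := by
  set A := nsort x with hA
  set B := nsort y with hB
  have hAanti : Antitone A := nsort_antitone hx.1
  have hBanti : Antitone B := nsort_antitone hy.1
  have hAnn : ∀ u, 0 ≤ A u := nsort_nonneg hx.1
  have hBnn : ∀ u, 0 ≤ B u := nsort_nonneg hy.1
  have key : ∀ d u : ℕ, A u * B (u + d) = A (u + d) * B u := by
    intro d
    induction d with
    | zero => intro u; ring
    | succ d ih =>
      intro u
      have h1 := ih u
      have h2 := hcross (u + d)
      by_cases hAd : A (u + d) = 0
      · have hAd1 : A (u + d + 1) = 0 :=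
          le_antisymm (hAd ▸ hAanti (Nat.le_succ _)) (hAnn _)
        by_cases hAu : A u = 0
        · rw [show u + (d+1) = u + d + 1 from rfl, hAu, hAd1, zero_mul, zero_mul]
        · -- A u > 0; show B (u+d+1) = 0
          have hBd1 : B (u + d + 1) = 0 := by
            by_contra hc
            have hBpos : 0 < B (u + d + 1) := lt_of_le_of_ne (hBnn _) (Ne.symm hc)
            have hBd : 0 < B (u + d) := lt_of_lt_of_le hBpos (hBanti (Nat.le_succ _))
            have : A u * B (u + d) = 0 := by rw [h1, hAd, zero_mul]
            rcases mul_eq_zero.mp this with h | h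
            · exact hAu h
            · linarith
          rw [show u + (d+1) = u + d + 1 from rfl, hAd1, hBd1, mul_zero, zero_mul]
      · have hApos : 0 < A (u + d) := lt_of_le_of_ne (hAnn _) (Ne.symm hAd)
        have : A (u + d) * (A u * B (u + d + 1)) = A (u + d) * (A (u + d + 1) * B u) := by
          calc A (u + d) * (A u * B (u + d + 1)) = A u * (A (u + d) * B (u + d + 1)) := by ring
          _ = A u * (A (u + d + 1) * B (u + d)) := by rw [h2]
          _ = A (u + d + 1) * (A u * B (u + d)) := by ring
          _ = A (u + d + 1) * (A (u + d) * B u) := by rw [h1]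
          _ = A (u + d) * (A (u + d + 1) * B u) := by ring
        exact mul_left_cancel₀ hAd this
  have key2 : ∀ u w : ℕ, A u * B w = A w * B u := by
    intro u w
    rcases le_total u w with h | h
    · obtain ⟨d, rfl⟩ := Nat.exists_eq_add_of_le h
      exact key d u
    · obtain ⟨d, rfl⟩ := Nat.exists_eq_add_of_le h
      exact (key d w).symm
  intro u
  have hsA : ∑ w ∈ range n, A w = 1 := by
    rw [hA, ← sum_nsort_g x (fun t => t)]; exact hx.2
  have hsB : ∑ w ∈ range n, B w = 1 := by
    rw [hB, ← sum_nsort_g y (fun t => t)]; exact hy.2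
  have : B u * (∑ w ∈ range n, A w) = A u * (∑ w ∈ range n, B w) := by
    rw [Finset.mul_sum, Finset.mul_sum]
    apply Finset.sum_congr rfl
    intro w _
    rw [mul_comm (B u) (A w)]
    exact (key2 u w).symm ▸ (key2 w u)
  rw [hsA, hsB, mul_one, mul_one] at this
  exact this.symm

/-- antisymmetry of the Bayesian order on distributions -/
lemma bayes_antisymm {x y : Fin n → ℝ} (hx : IsDist x) (hy : IsDist y)
    (hxy : BayesLE x y) (hyx : BayesLE y x) : x = y := by
  obtain ⟨σ, hσx, hσy, hadj⟩ := hxy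
  obtain ⟨τ, hτy, hτx, hadj'⟩ := hyx
  have hxx : x ∘ τ = x ∘ σ := antitone_unique hτx hσx
  have hyy : y ∘ τ = y ∘ σ := antitone_unique hτy hσy
  have hadj2 : AdjLE (y ∘ σ) (x ∘ σ) := by
    rw [← hxx, ← hyy]; exact hadj'
  have hcross : ∀ u : ℕ, nsort x u * nsort y (u + 1) = nsort x (u + 1) * nsort y u := by
    intro u
    by_cases hu : u + 1 < n
    · apply le_antisymm
      · have h := hadj u hu
        have e1 := nsort_eq hσx (⟨u, Nat.lt_of_succ_lt hu⟩ : Fin n)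
        have e2 := nsort_eq hσx (⟨u + 1, hu⟩ : Fin n)
        have e3 := nsort_eq hσy (⟨u, Nat.lt_of_succ_lt hu⟩ : Fin n)
        have e4 := nsort_eq hσy (⟨u + 1, hu⟩ : Fin n)
        simp only [Function.comp] at h
        rw [e1, e2, e3, e4] at h
        exact h
      · have h := hadj2 u hu
        have e1 := nsort_eq hσx (⟨u, Nat.lt_of_succ_lt hu⟩ : Fin n)
        have e2 := nsort_eq hσx (⟨u + 1, hu⟩ : Fin n)
        have e3 := nsort_eq hσy (⟨u, Nat.lt_of_succ_lt hu⟩ : Fin n)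
        have e4 := nsort_eq hσy (⟨u + 1, hu⟩ : Fin n)
        simp only [Function.comp] at h
        rw [e1, e2, e3, e4] at h
        linarith
    · have h1 : nsort x (u + 1) = 0 := by
        rw [nsort, dif_neg hu]
      have h2 : nsort y (u + 1) = 0 := by
        rw [nsort, dif_neg hu]
      rw [h1, h2, mul_zero, zero_mul]
  have heq := cross_eq hx hy hcross
  funext i
  have e1 := nsort_eq hσx (σ.symm i)
  have e2 := nsort_eq hσy (σ.symm i)
  simp only [Equiv.apply_symm_apply] at e1 e2
  rw [e1, e2, heq]

end bayes

section pmuS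

/-- point mass -/
def pm (i : Fin n) : Fin n → ℝ := fun j => if j = i then 1 else 0

/-- uniform distribution on a set -/
noncomputable def uS (S : Finset (Fin n)) : Fin n → ℝ :=
  fun i => if i ∈ S then ((S.card : ℝ))⁻¹ else 0

lemma pm_isDist (i : Fin n) : IsDist (pm i) := by
  constructor
  · intro j; unfold pm; split <;> norm_num
  · simp [pm]

lemma pm_zero_or_one (i j : Fin n) : pm i j = 0 ∨ pm i j = 1 := by
  unfold pm; split
  · right; rfl
  · left; rfl

lemma uS_isDist {S : Finset (Fin n)} (hS : S.Nonempty) : IsDist (uS S) := by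
  have hcard : 0 < S.card := Finset.card_pos.mpr hS
  constructor
  · intro j; unfold uS; split
    · positivity
    · exact le_refl 0
  · unfold uS
    rw [Finset.sum_ite_mem, Finset.univ_inter, Finset.sum_const, nsmul_eq_mul]
    rw [mul_inv_cancel₀]
    exact_mod_cast hcard.ne'

lemma uS_pos_iff {S : Finset (Fin n)} (hS : S.Nonempty) (i : Fin n) :
    0 < uS S i ↔ i ∈ S := by
  have hcard : 0 < S.card := Finset.card_pos.mpr hS
  unfold uS
  constructor
  · intro h; by_contra hc; rw [if_neg hc] at h; linarith
  · intro h; rw [if_pos h]; positivity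

lemma bayesLE_pm {z : Fin n → ℝ} {i : Fin n} (hz : ∀ j, 0 ≤ z j)
    (hmax : ∀ j, z j ≤ z i) : BayesLE z (pm i) := by
  have hzS : ∀ a ∈ ({i} : Finset (Fin n)), ∀ j ∉ ({i} : Finset (Fin n)), z j ≤ z a := by
    intro a ha j _
    rw [Finset.mem_singleton] at ha
    rw [ha]; exact hmax j
  obtain ⟨σ, hσz, hσS⟩ := sortset hzS
  have hcard : ({i} : Finset (Fin n)).card = 1 := Finset.card_singleton i
  have hform : ∀ v : Fin n, (pm i ∘ σ) v = if (v : ℕ) < 1 then 1 else 0 := by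
    intro v
    simp only [Function.comp, pm]
    have := hσS v
    rw [hcard] at this
    rw [Finset.mem_singleton] at this
    by_cases hv : σ v = i
    · rw [if_pos hv, if_pos (this.mp hv)]
    · rw [if_neg hv, if_neg (fun hc => hv (this.mpr hc))]
  refine ⟨σ, hσz, ?_, ?_⟩
  · intro a b hab
    rw [hform a, hform b]
    by_cases hb : (b : ℕ) < 1
    · rw [if_pos hb, if_pos (lt_of_le_of_lt (by exact_mod_cast hab) hb)]
    · rw [if_neg hb]; split <;> norm_num
  · intro u hu
    show z (σ _) * (pm i ∘ σ) _ ≤ z (σ _) * (pm i ∘ σ) _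
    rw [hform ⟨u + 1, hu⟩, hform ⟨u, Nat.lt_of_succ_lt hu⟩]
    simp only []
    rw [if_neg (by omega : ¬ (u + 1 < 1))]
    rw [mul_zero]
    split
    · exact mul_nonneg (hz _) (by norm_num)
    · exact mul_nonneg (hz _) (le_refl 0)

lemma max_of_bayesLE_pm {z : Fin n → ℝ} {i : Fin n}
    (h : BayesLE z (pm i)) : ∀ j, z j ≤ z i := by
  obtain ⟨σ, hσz, hσp, _⟩ := h
  intro j
  set u₀ := σ.symm i with hu₀
  have h1 : (pm i ∘ σ) u₀ = 1 := by
    simp [Function.comp, pm, hu₀]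
  have hle : u₀ ≤ σ.symm j := by
    by_contra hc
    push_neg at hc
    have h2 : (1 : ℝ) ≤ (pm i ∘ σ) (σ.symm j) := h1 ▸ hσp hc.le
    simp only [Function.comp, pm, Equiv.apply_symm_apply] at h2
    split at h2
    · rename_i hj
      rw [hj] at hc
      exact absurd rfl (ne_of_lt hc)
    · linarith
  have := hσz hle
  simp only [Function.comp, hu₀, Equiv.apply_symm_apply] at this
  exact this

lemma bayesLE_uS {z : Fin n → ℝ} {S : Finset (Fin n)} (hz : ∀ j, 0 ≤ z j)
    (hS : S.Nonempty) (hmax : ∀ i ∈ S, ∀ j, z j ≤ z i) : BayesLE z (uS S) := by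
  have hcard : 0 < S.card := Finset.card_pos.mpr hS
  have hzS : ∀ a ∈ S, ∀ j ∉ S, z j ≤ z a := fun a ha j _ => hmax a ha j
  obtain ⟨σ, hσz, hσS⟩ := sortset hzS
  have hform : ∀ v : Fin n, (uS S ∘ σ) v =
      if (v : ℕ) < S.card then ((S.card : ℝ))⁻¹ else 0 := by
    intro v
    simp only [Function.comp, uS]
    by_cases hv : σ v ∈ S
    · rw [if_pos hv, if_pos ((hσS v).mp hv)]
    · rw [if_neg hv, if_neg (fun hc => hv ((hσS v).mpr hc))]
  refine ⟨σ, hσz, ?_, ?_⟩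
  · intro a b hab
    rw [hform a, hform b]
    by_cases hb : (b : ℕ) < S.card
    · rw [if_pos hb, if_pos (lt_of_le_of_lt (by exact_mod_cast hab) hb)]
    · rw [if_neg hb]; split
      · positivity
      · exact le_refl 0
  · intro u hu
    show z (σ _) * (uS S ∘ σ) _ ≤ z (σ _) * (uS S ∘ σ) _
    rw [hform ⟨u + 1, hu⟩, hform ⟨u, Nat.lt_of_succ_lt hu⟩]
    simp only []
    by_cases hb : u + 1 < S.card
    · rw [if_pos hb, if_pos (by omega : u < S.card)]
      have h1 : z (σ ⟨u, Nat.lt_of_succ_lt hu⟩) ≤ z (σ ⟨u + 1, hu⟩) := by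
        apply hmax
        exact (hσS ⟨u + 1, hu⟩).mpr hb
      have : (0:ℝ) < ((S.card : ℝ))⁻¹ := by positivity
      nlinarith
    · rw [if_neg hb, mul_zero]
      split
      · exact mul_nonneg (hz _) (by positivity)
      · exact mul_nonneg (hz _) (le_refl 0)

lemma supp_subset_of_uS_le {x : Fin n → ℝ} {S : Finset (Fin n)}
    (hx : IsDist x) (hS : S.Nonempty) (h : BayesLE (uS S) x) :
    ∀ j ∉ S, x j = 0 := by
  obtain ⟨σ, hσu, hσx, hadj⟩ := h
  have hcard : 0 < S.card := Finset.card_pos.mpr hS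
  have hmem : ∀ u : Fin n, σ u ∈ S ↔ (u : ℕ) < S.card := by
    intro u
    have hlow : ∀ ⦃a b : Fin n⦄, a ≤ b → σ b ∈ S → σ a ∈ S := by
      intro a b hab hb
      have h1 : uS S (σ b) ≤ uS S (σ a) := hσu hab
      have h2 : 0 < uS S (σ b) := (uS_pos_iff hS _).mpr hb
      have h3 : 0 < uS S (σ a) := lt_of_lt_of_le h2 h1
      exact (uS_pos_iff hS _).mp h3
    have hcard2 : (univ.filter (fun u => σ u ∈ S)).card = S.card := by
      apply Finset.card_equiv σ; intro i; simp
    have := lower_mem_iff (L := univ.filter (fun u => σ u ∈ S))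
      (by intro a b hab hb
          simp only [Finset.mem_filter, Finset.mem_univ, true_and] at hb ⊢
          exact hlow hab hb) (u := u)
    simp only [Finset.mem_filter, Finset.mem_univ, true_and] at this
    rw [this, hcard2]
  intro j hj
  by_cases hsn : S.card < n
  · -- adjacency at slot S.card - 1
    have hs1 : S.card - 1 + 1 = S.card := by omega
    have hadj1 := hadj (S.card - 1) (by omega)
    have e1 : σ ⟨S.card - 1, by omega⟩ ∈ S := by
      rw [hmem]; show S.card - 1 < S.card; omega
    have e2 : ¬ (σ ⟨S.card - 1 + 1, by omega⟩ ∈ S) := by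
      rw [hmem]; show ¬ (S.card - 1 + 1 < S.card); omega
    simp only [Function.comp] at hadj1
    have e3 : uS S (σ ⟨S.card - 1, by omega⟩) = ((S.card : ℝ))⁻¹ := if_pos e1
    have e4 : uS S (σ ⟨S.card - 1 + 1, by omega⟩) = 0 := if_neg e2
    rw [e4] at hadj1
    have e3' : uS S (σ ⟨S.card - 1, Nat.lt_of_succ_lt (by omega)⟩) = ((S.card : ℝ))⁻¹ := if_pos (by
      rw [hmem]; show S.card - 1 < S.card; omega)
    rw [e3'] at hadj1
    rw [zero_mul] at hadj1
    -- hadj1 : (card)⁻¹ * x (σ ⟨S.card⟩) ≤ 0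
    have hxs : x (σ ⟨S.card - 1 + 1, by omega⟩) = 0 := by
      have hpos : (0:ℝ) < ((S.card : ℝ))⁻¹ := by positivity
      have := hx.1 (σ ⟨S.card - 1 + 1, by omega⟩)
      nlinarith
    -- antitone beyond
    have hslot : S.card ≤ ((σ.symm j : ℕ)) := by
      by_contra hc
      push_neg at hc
      have : σ (σ.symm j) ∈ S := by rw [hmem]; exact hc
      simp only [Equiv.apply_symm_apply] at this
      exact hj this
    have hle : (⟨S.card - 1 + 1, by omega⟩ : Fin n) ≤ σ.symm j := by
      rw [Fin.le_def]
      show S.card - 1 + 1 ≤ ((σ.symm j : Fin n) : ℕ)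
      omega
    have h5 := hσx hle
    simp only [Function.comp, Equiv.apply_symm_apply] at h5
    rw [hxs] at h5
    exact le_antisymm h5 (hx.1 j)
  · exfalso
    have : (σ.symm j : ℕ) < n := (σ.symm j).isLt
    have : σ (σ.symm j) ∈ S := by rw [hmem]; omega
    simp only [Equiv.apply_symm_apply] at this
    exact hj this

lemma uS_le_of_supp_subset {x : Fin n → ℝ} {S : Finset (Fin n)}
    (hx : IsDist x) (hS : S.Nonempty) (hsupp : ∀ j ∉ S, x j = 0) :
    BayesLE (uS S) x := by
  have hcard : 0 < S.card := Finset.card_pos.mpr hS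
  have hzS : ∀ i ∈ S, ∀ j ∉ S, x j ≤ x i := by
    intro i _ j hj
    rw [hsupp j hj]; exact hx.1 i
  obtain ⟨σ, hσx, hσS⟩ := sortset hzS
  have hform : ∀ v : Fin n, (uS S ∘ σ) v =
      if (v : ℕ) < S.card then ((S.card : ℝ))⁻¹ else 0 := by
    intro v
    simp only [Function.comp, uS]
    by_cases hv : σ v ∈ S
    · rw [if_pos hv, if_pos ((hσS v).mp hv)]
    · rw [if_neg hv, if_neg (fun hc => hv ((hσS v).mpr hc))]
  refine ⟨σ, ?_, hσx, ?_⟩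
  · intro a b hab
    rw [hform a, hform b]
    by_cases hb : (b : ℕ) < S.card
    · rw [if_pos hb, if_pos (lt_of_le_of_lt (by exact_mod_cast hab) hb)]
    · rw [if_neg hb]; split
      · positivity
      · exact le_refl 0
  · intro u hu
    show (uS S ∘ σ) _ * x (σ _) ≤ (uS S ∘ σ) _ * x (σ _)
    rw [hform ⟨u + 1, hu⟩, hform ⟨u, Nat.lt_of_succ_lt hu⟩]
    simp only []
    by_cases hb : u + 1 < S.card
    · rw [if_pos hb, if_pos (by omega : u < S.card)]
      have h1 : x (σ ⟨u + 1, hu⟩) ≤ x (σ ⟨u, Nat.lt_of_succ_lt hu⟩) :=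
        hσx (by simp [Fin.le_def])
      have : (0:ℝ) < ((S.card : ℝ))⁻¹ := by positivity
      nlinarith
    · have hx1 : x (σ ⟨u + 1, hu⟩) = 0 := by
        apply hsupp
        intro hc
        exact hb ((hσS ⟨u + 1, hu⟩).mp hc)
      rw [hx1, if_neg hb, mul_zero, zero_mul]

end pmuS

section entropy

lemma ent_strictmono {β C cmin : ℝ} (hβ : 0 < β) (hcmin : 0 < cmin)
    (hC : Real.log cmin ≤ C) :
    StrictMonoOn
      (fun s => -((1 - β*s) * Real.log (1 - β*s)) - (1 - β*s)*C - β*(s*Real.log s))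
      (Set.Ioo 0 (cmin/(1+β*cmin))) := by
  have hden : 0 < 1 + β*cmin := by nlinarith
  have hfacts : ∀ s ∈ Set.Ioo (0:ℝ) (cmin/(1+β*cmin)),
      0 < s ∧ 0 < 1 - β*s ∧ s < (1 - β*s)*cmin := by
    intro s hs
    obtain ⟨hs0, hs1⟩ := hs
    have h2 : s * (1+β*cmin) < cmin := (lt_div_iff₀ hden).mp hs1
    have h3 : s < (1 - β*s)*cmin := by nlinarith
    have h4 : 0 < 1 - β*s := by nlinarith
    exact ⟨hs0, h4, h3⟩
  have hder : ∀ s ∈ Set.Ioo (0:ℝ) (cmin/(1+β*cmin)),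
      HasDerivAt (fun s => -((1 - β*s) * Real.log (1 - β*s)) - (1 - β*s)*C - β*(s*Real.log s))
        (β * (Real.log (1 - β*s) + C - Real.log s)) s := by
    intro s hs
    obtain ⟨hs0, h1βs, _⟩ := hfacts s hs
    have hL : HasDerivAt (fun s : ℝ => 1 - β*s) (-β) s := by
      simpa using ((hasDerivAt_id s).const_mul β).const_sub 1
    have hlog : HasDerivAt (fun s : ℝ => Real.log (1 - β*s)) ((1 - β*s)⁻¹ * (-β)) s :=
      by have := (Real.hasDerivAt_log h1βs.ne').comp s hL; exact this
    have hT1 : HasDerivAt (fun s : ℝ => (1 - β*s) * Real.log (1 - β*s))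
        ((-β) * Real.log (1 - β*s) + (1 - β*s) * ((1 - β*s)⁻¹ * (-β))) s := hL.mul hlog
    have hT2 : HasDerivAt (fun s : ℝ => (1 - β*s)*C) ((-β)*C) s := hL.mul_const C
    have hT3 : HasDerivAt (fun s : ℝ => s * Real.log s)
        (1 * Real.log s + s * s⁻¹) s :=
      (hasDerivAt_id s).mul (Real.hasDerivAt_log hs0.ne')
    have h := ((hT1.neg.sub hT2).sub (hT3.const_mul β))
    refine h.congr_deriv ?_
    rw [mul_inv_cancel_left₀ h1βs.ne', mul_inv_cancel₀ hs0.ne']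
    ring
  apply strictMonoOn_of_deriv_pos (convex_Ioo _ _)
  · intro s hs
    exact ((hder s hs).differentiableAt).continuousAt.continuousWithinAt
  · intro s hs
    rw [interior_Ioo] at hs
    rw [(hder s hs).deriv]
    obtain ⟨hs0, h1βs, hkey⟩ := hfacts s hs
    have h1 : Real.log s < Real.log ((1 - β*s)*cmin) := Real.log_lt_log hs0 hkey
    rw [Real.log_mul h1βs.ne' hcmin.ne'] at h1
    have : Real.log s < Real.log (1 - β*s) + C := by linarith
    have h2 : 0 < Real.log (1 - β*s) + C - Real.log s := by linarith
    positivity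

end entropy

section step4

/-- auxiliary: positive entries are at least the minimal positive sorted value -/
lemma min_le_of_pos {x : Fin n → ℝ} (hx : IsDist x) {i : Fin n} (hi : 0 < x i) :
    nsort x (Ksupp x - 1) ≤ x i := by
  have h1 := nsort_apply x i
  have h2 : ((aperm x).symm i : ℕ) < Ksupp x := by
    rw [← nsort_pos_iff, ← h1]; exact hi
  rw [h1]
  exact nsort_antitone hx.1 (by omega)

lemma step4 {x x' : Fin n → ℝ} (hx : IsDist x) (hx' : IsDist x')
    (hsupp : ∀ i, (0 < x i ↔ 0 < x' i))
    (hK' : Ksupp x' = Ksupp x)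
    (hEQ1 : ∀ y, IsDist y → Ksupp y < Ksupp x → (BayesLE x' y → BayesLE x y))
    (hm : 0 < gtcard x (nsort x (Ksupp x - 1)))
    (hm' : 0 < gtcard x' (nsort x' (Ksupp x' - 1)))
    (hlt : gtcard x' (nsort x' (Ksupp x' - 1)) < gtcard x (nsort x (Ksupp x - 1))) :
    False := by
  classical
  set K := Ksupp x with hK_def
  have hK1 : 1 ≤ K := Ksupp_pos hx
  have hKn : K ≤ n := Ksupp_le x
  set A := nsort x with hA_def
  set B := nsort x' with hB_def
  set α := A (K - 1) with hα_def
  set α' := B (K - 1) with hα'_def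
  have hαpos : 0 < α := (nsort_pos_iff x (K - 1)).mpr (by omega)
  have hα'pos : 0 < α' := by
    rw [hα'_def, hB_def, nsort_pos_iff, hK']; omega
  set m := gtcard x α with hm_def
  set m' := gtcard x' α' with hm'_def
  have hAgt : ∀ u, α < A u ↔ u < m := fun u => nsort_gt_iff hαpos.le u
  have hmK : m < K := by
    have := (hAgt (K - 1))
    by_contra hc
    push_neg at hc
    exact lt_irrefl α (this.mpr (by omega))
  have hm'2 : 0 < m' := by rw [hK'] at hm'; exact hm'
  have hlt2 : m' < m := by rw [hK'] at hlt; exact hlt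
  -- T' : upper set of x'
  set T' : Finset (Fin n) := univ.filter (fun i => α' < x' i) with hT'_def
  have hT'card : T'.card = m' := rfl
  have hT'pos : ∀ i ∈ T', 0 < x' i := by
    intro i hi
    rw [hT'_def, Finset.mem_filter] at hi
    linarith [hi.2]
  have hT'zS : ∀ i ∈ T', ∀ j ∉ T', x' j ≤ x' i := by
    intro i hi j hj
    rw [hT'_def, Finset.mem_filter] at hi
    rw [hT'_def, Finset.mem_filter] at hj
    push_neg at hj
    have h2 := hj (Finset.mem_univ j)
    linarith [hi.2]
  have hT'ne : T'.Nonempty := Finset.card_pos.mp (by rw [hT'card]; exact hm'2)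
  -- membership in T' forces top-m' slot values of x
  have hT'_top : ∀ i ∈ T', ∃ u : ℕ, u < m' ∧ x i = A u := by
    have hyd : IsDist (condS x' T') := condS_isDist hT'pos hT'ne
    have hKy : Ksupp (condS x' T') = m' := by rw [Ksupp_condS hT'pos hT'ne, hT'card]
    have hxy : BayesLE x (condS x' T') :=
      hEQ1 _ hyd (by omega) (bayesLE_condS hx'.1 hT'zS hT'pos hT'ne)
    obtain ⟨hmap, _⟩ := extract hxy
    intro i hi
    obtain ⟨u, hun, hxu, hyu⟩ := hmap i
    refine ⟨u, ?_, hxu⟩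
    have hy'pos : 0 < condS x' T' i := (condS_pos_iff hT'pos hT'ne i).mpr hi
    rw [hyu, nsort_pos_iff, hKy] at hy'pos
    exact hy'pos
  -- the minimum-valued index of x
  have hK1n : K - 1 < n := by omega
  set i₀ : Fin n := aperm x ⟨K - 1, hK1n⟩ with hi₀_def
  have hi₀ : x i₀ = α := by
    rw [hi₀_def, hα_def, hA_def]
    exact nsort_eq (aperm_antitone x) ⟨K - 1, hK1n⟩
  have hi₀T' : i₀ ∉ T' := by
    intro hc
    obtain ⟨u, hum', hxu⟩ := hT'_top i₀ hc
    have : α < A u := (hAgt u).mpr (by omega)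
    rw [← hxu, hi₀] at this
    exact lt_irrefl _ this
  have hi₀S : 0 < x' i₀ := (hsupp i₀).mp (by rw [hi₀]; exact hαpos)
  -- the complement of T' in the support of x' has ≥ 2 elements
  set Sc : Finset (Fin n) := (univ.filter (fun i => 0 < x' i)) \ T' with hSc_def
  have hT'sub : T' ⊆ univ.filter (fun i => 0 < x' i) := by
    intro i hi
    rw [Finset.mem_filter]
    exact ⟨Finset.mem_univ i, hT'pos i hi⟩
  have hScard : Sc.card = K - m' := by
    have h0 : (univ.filter (fun i => 0 < x' i)).card = K := by rw [← hK']; rfl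
    rw [hSc_def, Finset.card_sdiff_of_subset hT'sub, hT'card, h0]
  have hi₀Sc : i₀ ∈ Sc := by
    rw [hSc_def, Finset.mem_sdiff, Finset.mem_filter]
    exact ⟨⟨Finset.mem_univ i₀, hi₀S⟩, hi₀T'⟩
  obtain ⟨j₂, hj₂Sc, hj₂ne⟩ :=
    Finset.exists_mem_ne (by rw [hScard]; omega) i₀
  have hj₂S : 0 < x' j₂ := by
    rw [hSc_def, Finset.mem_sdiff, Finset.mem_filter] at hj₂Sc
    exact hj₂Sc.1.2
  have hj₂T' : j₂ ∉ T' := by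
    rw [hSc_def, Finset.mem_sdiff] at hj₂Sc
    exact hj₂Sc.2
  -- generic extraction from insert j T'
  have hgen : ∀ j : Fin n, 0 < x' j → j ∉ T' →
      ∀ i : Fin n, ∃ u : ℕ, x i = A u ∧ (i ∈ insert j T' ↔ u < m' + 1) := by
    intro j hjpos hjT'
    set T := insert j T' with hT_def
    have hTcard : T.card = m' + 1 := by
      rw [hT_def, Finset.card_insert_of_notMem hjT', hT'card]
    have hTpos : ∀ i ∈ T, 0 < x' i := by
      intro i hi
      rw [hT_def, Finset.mem_insert] at hi
      rcases hi with h | h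
      · rw [h]; exact hjpos
      · exact hT'pos i h
    have hTzS : ∀ i ∈ T, ∀ l ∉ T, x' l ≤ x' i := by
      intro i hi l hl
      rw [hT_def, Finset.mem_insert] at hl
      push_neg at hl
      have hl2 : x' l ≤ α' := by
        have : l ∉ T' := hl.2
        rw [hT'_def, Finset.mem_filter] at this
        push_neg at this
        exact this (Finset.mem_univ l)
      have hi2 : α' ≤ x' i := by
        have := min_le_of_pos hx' (hTpos i hi)
        rw [hK'] at this
        exact this
      linarith
    have hTne : T.Nonempty := ⟨j, by rw [hT_def]; exact Finset.mem_insert_self j T'⟩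
    have hyd : IsDist (condS x' T) := condS_isDist hTpos hTne
    have hKy : Ksupp (condS x' T) = m' + 1 := by
      rw [Ksupp_condS hTpos hTne, hTcard]
    have hxy : BayesLE x (condS x' T) :=
      hEQ1 _ hyd (by omega) (bayesLE_condS hx'.1 hTzS hTpos hTne)
    obtain ⟨hmap, _⟩ := extract hxy
    intro i
    obtain ⟨u, hun, hxu, hyu⟩ := hmap i
    refine ⟨u, hxu, ?_⟩
    constructor
    · intro hi
      have hypos : 0 < condS x' T i := (condS_pos_iff hTpos hTne i).mpr hi
      rw [hyu, nsort_pos_iff, hKy] at hypos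
      exact hypos
    · intro hu
      by_contra hc
      have hy0 : condS x' T i = 0 := by
        rw [condS, if_neg hc]
      have : 0 < condS x' T i := by
        rw [hyu, nsort_pos_iff, hKy]; exact hu
      linarith
  -- apply with j = i₀ at i₀ : slot ≤ m'
  obtain ⟨u₁, hxu₁, hmem₁⟩ := hgen i₀ hi₀S hi₀T' i₀
  have hu₁ : u₁ < m' + 1 := hmem₁.mp (Finset.mem_insert_self i₀ T')
  -- apply with j = j₂ at i₀ : slot ≥ m' + 1
  obtain ⟨u₂, hxu₂, hmem₂⟩ := hgen j₂ hj₂S hj₂T' i₀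
  have hu₂ : ¬ (u₂ < m' + 1) := by
    intro hc
    have : i₀ ∈ insert j₂ T' := hmem₂.mpr hc
    rw [Finset.mem_insert] at this
    rcases this with h | h
    · exact hj₂ne h.symm
    · exact hi₀T' h
  push_neg at hu₂
  -- contradiction : A m' = α but m' < m means α < A m'
  have hAanti : Antitone A := nsort_antitone hx.1
  have h1 : A m' ≤ A u₁ := hAanti (by omega)
  have h2 : A u₂ ≤ A m' := hAanti (by omega)
  rw [← hxu₁, hi₀] at h1
  rw [← hxu₂, hi₀] at h2
  have : α < A m' := (hAgt m').mpr hlt2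
  linarith

end step4

section core

lemma eq_uS_of_m_zero {x : Fin n → ℝ} (hx : IsDist x)
    (hm : gtcard x (nsort x (Ksupp x - 1)) = 0) :
    x = uS (univ.filter (fun i => 0 < x i)) := by
  classical
  have hK1 : 1 ≤ Ksupp x := Ksupp_pos hx
  have hαpos : 0 < nsort x (Ksupp x - 1) := (nsort_pos_iff x (Ksupp x - 1)).mpr (by omega)
  set α := nsort x (Ksupp x - 1) with hα_def
  have hle : ∀ i, x i ≤ α := by
    intro i
    by_contra hc
    push_neg at hc
    have h2 : i ∈ univ.filter (fun j => α < x j) := by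
      rw [Finset.mem_filter]; exact ⟨Finset.mem_univ i, hc⟩
    have h3 : (univ.filter (fun j => α < x j)) = ∅ := Finset.card_eq_zero.mp hm
    rw [h3] at h2
    exact absurd h2 (Finset.notMem_empty i)
  have hKα : (Ksupp x : ℝ) * α = 1 := by
    have h1 : ∑ u ∈ range (Ksupp x), nsort x u = 1 := sum_range_nsort hx
    have h2 : ∀ u ∈ range (Ksupp x), nsort x u = α := by
      intro u hu
      rw [Finset.mem_range] at hu
      have ha : nsort x u ≤ α := by
        by_cases hun : u < n
        · have h3 := hle (aperm x ⟨u, hun⟩)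
          rw [nsort_eq (aperm_antitone x) ⟨u, hun⟩] at h3
          exact h3
        · rw [nsort, dif_neg hun]; exact hαpos.le
      have hb : α ≤ nsort x u := nsort_antitone hx.1 (by omega)
      linarith
    rw [Finset.sum_congr rfl h2, Finset.sum_const, Finset.card_range, nsmul_eq_mul] at h1
    exact h1
  funext i
  unfold uS
  have hcard : (univ.filter (fun i => 0 < x i)).card = Ksupp x := rfl
  rw [hcard]
  by_cases hi : 0 < x i
  · rw [if_pos (by rw [Finset.mem_filter]; exact ⟨Finset.mem_univ i, hi⟩)]
    have h3 : α ≤ x i := min_le_of_pos hx hi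
    have h4 := hle i
    have h5 : x i = α := le_antisymm h4 h3
    rw [h5]
    exact eq_inv_of_mul_eq_one_left (by linarith [hKα])
  · rw [if_neg (by rw [Finset.mem_filter]; push_neg; intro _; exact not_lt.mp hi)]
    exact le_antisymm (not_lt.mp hi) (hx.1 i)

lemma core {x x' : Fin n → ℝ} (hx : IsDist x) (hx' : IsDist x')
    (hsupp : ∀ i, (0 < x i ↔ 0 < x' i))
    (hEQ : ∀ y, IsDist y → Ksupp y < Ksupp x → (BayesLE x y ↔ BayesLE x' y))
    (hent : shannonEntropy x' = shannonEntropy x)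
    (hm : 0 < gtcard x (nsort x (Ksupp x - 1)))
    (hm' : 0 < gtcard x' (nsort x' (Ksupp x' - 1))) :
    x' = x := by
  classical
  have hK' : Ksupp x' = Ksupp x := by
    unfold Ksupp gtcard
    congr 1
    ext i
    simp only [Finset.mem_filter, Finset.mem_univ, true_and]
    exact (hsupp i).symm
  have hmm' : gtcard x' (nsort x' (Ksupp x' - 1)) = gtcard x (nsort x (Ksupp x - 1)) := by
    rcases lt_trichotomy (gtcard x' (nsort x' (Ksupp x' - 1)))
      (gtcard x (nsort x (Ksupp x - 1))) with h | h | h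
    · exact (step4 hx hx' hsupp hK' (fun y hy hKy => (hEQ y hy hKy).mpr) hm hm' h).elim
    · exact h
    · exact (step4 hx' hx (fun i => (hsupp i).symm) hK'.symm
        (fun y hy hKy => (hEQ y hy (by rw [hK'] at hKy; exact hKy)).mp) hm' hm h).elim
  have hK1 : 1 ≤ Ksupp x := Ksupp_pos hx
  have hKn : Ksupp x ≤ n := Ksupp_le x
  set K := Ksupp x with hK_def
  set A := nsort x with hA_def
  set B := nsort x' with hB_def
  have hAanti : Antitone A := nsort_antitone hx.1
  have hBanti : Antitone B := nsort_antitone hx'.1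
  set α := A (K - 1) with hα_def
  set α' := B (K - 1) with hα'_def
  have hαpos : 0 < α := (nsort_pos_iff x (K - 1)).mpr (by omega)
  have hα'pos : 0 < α' := by
    rw [hα'_def, hB_def, nsort_pos_iff, hK']; omega
  set m := gtcard x α with hm_def
  have hm2 : 0 < m := hm
  have hmm'2 : gtcard x' α' = m := by rw [hK'] at hmm'; exact hmm'
  have hAgt : ∀ u, α < A u ↔ u < m := fun u => nsort_gt_iff hαpos.le u
  have hBgt : ∀ u, α' < B u ↔ u < m := by
    intro u; rw [← hmm'2]; exact nsort_gt_iff hα'pos.le u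
  have hmK : m < K := by
    by_contra hc
    push_neg at hc
    exact lt_irrefl α ((hAgt (K - 1)).mpr (by omega))
  have hAKpos : ∀ u, u < K → 0 < A u := fun u hu => (nsort_pos_iff x u).mpr hu
  have hBKpos : ∀ u, u < K → 0 < B u := by
    intro u hu; rw [hB_def, nsort_pos_iff, hK']; exact hu
  have hAtail : ∀ u, m ≤ u → u < K → A u = α := by
    intro u h1 h2
    have ha : A u ≤ α := by
      by_contra hc; push_neg at hc
      have := (hAgt u).mp hc; omega
    have hb : α ≤ A u := hAanti (by omega)
    linarith
  have hBtail : ∀ u, m ≤ u → u < K → B u = α' := by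
    intro u h1 h2
    have ha : B u ≤ α' := by
      by_contra hc; push_neg at hc
      have := (hBgt u).mp hc; omega
    have hb : α' ≤ B u := hBanti (by omega)
    linarith
  -- ratio inequalities, direction 1
  set T : Finset (Fin n) := univ.filter (fun i => α < x i) with hT_def
  have hTcard : T.card = m := rfl
  have hTpos : ∀ i ∈ T, 0 < x i := by
    intro i hi
    rw [hT_def, Finset.mem_filter] at hi
    linarith [hi.2]
  have hTzS : ∀ i ∈ T, ∀ j ∉ T, x j ≤ x i := by
    intro i hi j hj
    rw [hT_def, Finset.mem_filter] at hi
    rw [hT_def, Finset.mem_filter] at hj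
    push_neg at hj
    have h2 := hj (Finset.mem_univ j)
    linarith [hi.2]
  have hTne : T.Nonempty := Finset.card_pos.mp (by rw [hTcard]; exact hm2)
  set D := ∑ j ∈ T, x j with hD_def
  have hDpos : 0 < D := condS_sum_pos hTpos hTne
  have hDsum : D = ∑ u ∈ range m, A u := by
    rw [hD_def, sum_condS_range hx.1 hTzS, hTcard]
  have hKyT : Ksupp (condS x T) = m := by
    rw [Ksupp_condS hTpos hTne, hTcard]
  have hx'yT : BayesLE x' (condS x T) :=
    (hEQ _ (condS_isDist hTpos hTne) (by rw [hKyT]; omega)).mp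
      (bayesLE_condS hx.1 hTzS hTpos hTne)
  have hratio1 : ∀ u, u + 1 < m → B u * A (u + 1) ≤ B (u + 1) * A u := by
    obtain ⟨_, hadjT⟩ := extract hx'yT
    intro u hu
    have h := hadjT u (by omega)
    rw [nsort_condS hx.1 hTzS hTpos hTne u,
        nsort_condS hx.1 hTzS hTpos hTne (u + 1)] at h
    rw [if_pos (by rw [hTcard]; omega), if_pos (by rw [hTcard]; omega)] at h
    rw [← hD_def, ← hA_def, ← hB_def] at h
    rw [← mul_div_assoc, ← mul_div_assoc] at h
    exact (div_le_div_iff_of_pos_right hDpos).mp h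
  -- ratio inequalities, direction 2
  set T' : Finset (Fin n) := univ.filter (fun i => α' < x' i) with hT'_def
  have hT'card : T'.card = m := hmm'2
  have hT'pos : ∀ i ∈ T', 0 < x' i := by
    intro i hi
    rw [hT'_def, Finset.mem_filter] at hi
    linarith [hi.2]
  have hT'zS : ∀ i ∈ T', ∀ j ∉ T', x' j ≤ x' i := by
    intro i hi j hj
    rw [hT'_def, Finset.mem_filter] at hi
    rw [hT'_def, Finset.mem_filter] at hj
    push_neg at hj
    have h2 := hj (Finset.mem_univ j)
    linarith [hi.2]
  have hT'ne : T'.Nonempty := Finset.card_pos.mp (by rw [hT'card]; exact hm2)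
  have hD'pos : 0 < ∑ j ∈ T', x' j := condS_sum_pos hT'pos hT'ne
  have hKyT' : Ksupp (condS x' T') = m := by
    rw [Ksupp_condS hT'pos hT'ne, hT'card]
  have hxyT' : BayesLE x (condS x' T') :=
    (hEQ _ (condS_isDist hT'pos hT'ne) (by rw [hKyT']; omega)).mpr
      (bayesLE_condS hx'.1 hT'zS hT'pos hT'ne)
  have hratio2 : ∀ u, u + 1 < m → A u * B (u + 1) ≤ A (u + 1) * B u := by
    obtain ⟨_, hadjT'⟩ := extract hxyT'
    intro u hu
    have h := hadjT' u (by omega)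
    rw [nsort_condS hx'.1 hT'zS hT'pos hT'ne u,
        nsort_condS hx'.1 hT'zS hT'pos hT'ne (u + 1)] at h
    rw [if_pos (by rw [hT'card]; omega), if_pos (by rw [hT'card]; omega)] at h
    rw [← hA_def, ← hB_def] at h
    rw [← mul_div_assoc, ← mul_div_assoc] at h
    exact (div_le_div_iff_of_pos_right hD'pos).mp h
  have hcross : ∀ u, u + 1 < m → B u * A (u + 1) = B (u + 1) * A u := by
    intro u hu
    have h1 := hratio1 u hu
    have h2 := hratio2 u hu
    have h2' : B (u + 1) * A u ≤ B u * A (u + 1) := by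
      calc B (u + 1) * A u = A u * B (u + 1) := by ring
      _ ≤ A (u + 1) * B u := h2
      _ = B u * A (u + 1) := by ring
    exact le_antisymm h1 h2'
  -- proportionality on the head
  have hprop : ∀ u, u < m → B u * A 0 = B 0 * A u := by
    intro u
    induction u with
    | zero => intro _; ring
    | succ u ih =>
      intro hu
      have ih2 := ih (by omega)
      have hc := hcross u (by omega)
      have hAu : 0 < A u := hAKpos u (by omega)
      have key : A u * (B (u + 1) * A 0) = A u * (B 0 * A (u + 1)) := by
        calc A u * (B (u + 1) * A 0) = (B (u + 1) * A u) * A 0 := by ring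
        _ = (B u * A (u + 1)) * A 0 := by rw [← hc]
        _ = (B u * A 0) * A (u + 1) := by ring
        _ = (B 0 * A u) * A (u + 1) := by rw [ih2]
        _ = A u * (B 0 * A (u + 1)) := by ring
      exact mul_left_cancel₀ (ne_of_gt hAu) key
  have hA0 : 0 < A 0 := hAKpos 0 (by omega)
  have hB0 : 0 < B 0 := hBKpos 0 (by omega)
  set κ := B 0 / A 0 with hκ_def
  have hκpos : 0 < κ := div_pos hB0 hA0
  have hBκ : ∀ u, u < m → B u = κ * A u := by
    intro u hu
    rw [hκ_def, div_mul_eq_mul_div, eq_div_iff (ne_of_gt hA0)]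
    linarith [hprop u hu]
  -- sums
  have hIcoA : ∑ u ∈ Finset.Ico m K, A u = ((K - m : ℕ) : ℝ) * α := by
    have hcg : ∑ u ∈ Finset.Ico m K, A u = ∑ u ∈ Finset.Ico m K, α :=
      Finset.sum_congr rfl (fun u hu => by
        rw [Finset.mem_Ico] at hu
        exact hAtail u hu.1 hu.2)
    rw [hcg, Finset.sum_const, Nat.card_Ico, nsmul_eq_mul]
  have hIcoB : ∑ u ∈ Finset.Ico m K, B u = ((K - m : ℕ) : ℝ) * α' := by
    have hcg : ∑ u ∈ Finset.Ico m K, B u = ∑ u ∈ Finset.Ico m K, α' :=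
      Finset.sum_congr rfl (fun u hu => by
        rw [Finset.mem_Ico] at hu
        exact hBtail u hu.1 hu.2)
    rw [hcg, Finset.sum_const, Nat.card_Ico, nsmul_eq_mul]
  have hsumA : D + ((K - m : ℕ) : ℝ) * α = 1 := by
    have h1 : ∑ u ∈ range K, A u = 1 := sum_range_nsort hx
    rw [← Finset.sum_range_add_sum_Ico A (le_of_lt hmK)] at h1
    rw [hIcoA] at h1
    rw [hDsum]
    exact h1
  have hsumB : κ * D + ((K - m : ℕ) : ℝ) * α' = 1 := by
    have h1 : ∑ u ∈ range (Ksupp x'), nsort x' u = 1 := sum_range_nsort hx'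
    rw [hK', ← hB_def] at h1
    rw [← Finset.sum_range_add_sum_Ico B (le_of_lt hmK), hIcoB] at h1
    have h2 : ∑ u ∈ range m, B u = κ * D := by
      have hcg : ∑ u ∈ range m, B u = ∑ u ∈ range m, κ * A u :=
        Finset.sum_congr rfl (fun u hu => hBκ u (Finset.mem_range.mp hu))
      rw [hcg, ← Finset.mul_sum, ← hDsum]
    rw [h2] at h1
    exact h1
  set β := ((K - m : ℕ) : ℝ) with hβ_def
  have hβpos : 0 < β := by
    rw [hβ_def]
    exact_mod_cast (by omega : 0 < K - m)
  set C := ∑ u ∈ range m, (A u / D) * Real.log (A u / D) with hC_def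
  set cmin := A (m - 1) / D with hcmin_def
  have hcminpos : 0 < cmin := div_pos (hAKpos (m - 1) (by omega)) hDpos
  have hsumc : ∑ u ∈ range m, A u / D = 1 := by
    rw [← Finset.sum_div, ← hDsum, div_self (ne_of_gt hDpos)]
  have hCmin : Real.log cmin ≤ C := by
    have h1 : ∀ u ∈ range m, (A u / D) * Real.log cmin ≤ (A u / D) * Real.log (A u / D) := by
      intro u hu
      rw [Finset.mem_range] at hu
      have hcu : 0 < A u / D := div_pos (hAKpos u (by omega)) hDpos
      apply mul_le_mul_of_nonneg_left _ (le_of_lt hcu)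
      rw [Real.log_le_log_iff hcminpos hcu, hcmin_def]
      exact (div_le_div_iff_of_pos_right hDpos).mpr (hAanti (by omega))
    calc Real.log cmin = (∑ u ∈ range m, A u / D) * Real.log cmin := by rw [hsumc, one_mul]
    _ = ∑ u ∈ range m, (A u / D) * Real.log cmin := by rw [Finset.sum_mul]
    _ ≤ ∑ u ∈ range m, (A u / D) * Real.log (A u / D) := Finset.sum_le_sum h1
    _ = C := by rw [hC_def]
  have hgen : ∀ E : ℝ, 0 < E →
      ∑ u ∈ range m, (E * (A u / D)) * Real.log (E * (A u / D))
        = E * Real.log E + E * C := by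
    intro E hE
    have h1 : ∀ u ∈ range m, (E * (A u / D)) * Real.log (E * (A u / D))
        = (A u / D) * (E * Real.log E) + E * ((A u / D) * Real.log (A u / D)) := by
      intro u hu
      rw [Finset.mem_range] at hu
      have hcu : 0 < A u / D := div_pos (hAKpos u (by omega)) hDpos
      rw [Real.log_mul (ne_of_gt hE) (ne_of_gt hcu)]
      ring
    have hcg : ∑ u ∈ range m, (E * (A u / D)) * Real.log (E * (A u / D))
        = ∑ u ∈ range m, ((A u / D) * (E * Real.log E) + E * ((A u / D) * Real.log (A u / D))) :=
      Finset.sum_congr rfl h1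
    rw [hcg, Finset.sum_add_distrib, ← Finset.sum_mul, hsumc, one_mul,
      ← Finset.mul_sum, ← hC_def]
  have htrA : ∑ u ∈ range n, A u * Real.log (A u) = ∑ u ∈ range K, A u * Real.log (A u) := by
    symm
    apply Finset.sum_subset (Finset.range_subset_range.mpr hKn)
    intro u _ hu
    rw [Finset.mem_range, not_lt] at hu
    rw [show A u = 0 from nsort_zero_of_ge hx.1 hu]
    simp
  have hmux : shannonEntropy x = -(D * Real.log D + D * C + β * (α * Real.log α)) := by
    unfold shannonEntropy
    rw [sum_nsort_g x (fun t => t * Real.log t)]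
    rw [← hA_def]
    rw [htrA]
    rw [← Finset.sum_range_add_sum_Ico (fun u => A u * Real.log (A u)) (le_of_lt hmK)]
    have hIco2 : ∑ u ∈ Finset.Ico m K, A u * Real.log (A u) = β * (α * Real.log α) := by
      have hcg : ∑ u ∈ Finset.Ico m K, A u * Real.log (A u)
          = ∑ u ∈ Finset.Ico m K, α * Real.log α :=
        Finset.sum_congr rfl (fun u hu => by
          rw [Finset.mem_Ico] at hu
          rw [hAtail u hu.1 hu.2])
      rw [hcg, Finset.sum_const, Nat.card_Ico, nsmul_eq_mul, hβ_def]
    have hhead : ∑ u ∈ range m, A u * Real.log (A u) = D * Real.log D + D * C := by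
      have h2 : ∀ u ∈ range m, A u * Real.log (A u)
          = (D * (A u / D)) * Real.log (D * (A u / D)) := by
        intro u _
        have h3 : D * (A u / D) = A u := by field_simp
        rw [h3]
      have hcg : ∑ u ∈ range m, A u * Real.log (A u)
          = ∑ u ∈ range m, (D * (A u / D)) * Real.log (D * (A u / D)) :=
        Finset.sum_congr rfl h2
      rw [hcg, hgen D hDpos]
    rw [hIco2, hhead]
  have hEκD : 1 - β * α' = κ * D := by linarith [hsumB]
  have hκDpos : 0 < κ * D := mul_pos hκpos hDpos
  have htrB : ∑ u ∈ range n, B u * Real.log (B u) = ∑ u ∈ range K, B u * Real.log (B u) := by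
    symm
    apply Finset.sum_subset (Finset.range_subset_range.mpr hKn)
    intro u _ hu
    rw [Finset.mem_range, not_lt] at hu
    rw [show B u = 0 from nsort_zero_of_ge hx'.1 (by rw [hK']; omega)]
    simp
  have hmux' : shannonEntropy x'
      = -((κ * D) * Real.log (κ * D) + (κ * D) * C + β * (α' * Real.log α')) := by
    unfold shannonEntropy
    rw [sum_nsort_g x' (fun t => t * Real.log t)]
    rw [← hB_def]
    rw [htrB]
    rw [← Finset.sum_range_add_sum_Ico (fun u => B u * Real.log (B u)) (le_of_lt hmK)]
    have hIco2' : ∑ u ∈ Finset.Ico m K, B u * Real.log (B u) = β * (α' * Real.log α') := by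
      have hcg : ∑ u ∈ Finset.Ico m K, B u * Real.log (B u)
          = ∑ u ∈ Finset.Ico m K, α' * Real.log α' :=
        Finset.sum_congr rfl (fun u hu => by
          rw [Finset.mem_Ico] at hu
          rw [hBtail u hu.1 hu.2])
      rw [hcg, Finset.sum_const, Nat.card_Ico, nsmul_eq_mul, hβ_def]
    have hhead' : ∑ u ∈ range m, B u * Real.log (B u)
        = (κ * D) * Real.log (κ * D) + (κ * D) * C := by
      have h2 : ∀ u ∈ range m, B u * Real.log (B u)
          = ((κ * D) * (A u / D)) * Real.log ((κ * D) * (A u / D)) := by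
        intro u hu
        rw [Finset.mem_range] at hu
        have h3 : (κ * D) * (A u / D) = κ * A u := by
          field_simp
        rw [h3, ← hBκ u hu]
      have hcg : ∑ u ∈ range m, B u * Real.log (B u)
          = ∑ u ∈ range m, ((κ * D) * (A u / D)) * Real.log ((κ * D) * (A u / D)) :=
        Finset.sum_congr rfl h2
      rw [hcg, hgen (κ * D) hκDpos]
    rw [hIco2', hhead']
  have hED : 1 - β * α = D := by linarith [hsumA]
  have hsm := ent_strictmono hβpos hcminpos hCmin
  have hkeyα : α < (1 - β * α) * cmin := by
    rw [hED, hcmin_def]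
    have h3 : D * (A (m - 1) / D) = A (m - 1) := by field_simp
    rw [h3]
    exact (hAgt (m - 1)).mpr (by omega)
  have hkeyα' : α' < (1 - β * α') * cmin := by
    rw [hEκD, hcmin_def]
    have h3 : (κ * D) * (A (m - 1) / D) = κ * A (m - 1) := by field_simp
    rw [h3, ← hBκ (m - 1) (by omega)]
    exact (hBgt (m - 1)).mpr (by omega)
  have hden : (0:ℝ) < 1 + β * cmin := by
    have h1 : 0 < β * cmin := mul_pos hβpos hcminpos
    linarith
  have hdom : α ∈ Set.Ioo 0 (cmin / (1 + β * cmin)) := by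
    constructor
    · exact hαpos
    · rw [lt_div_iff₀ hden]
      have he1 : (1 - β * α) * cmin = cmin - β * α * cmin := by ring
      have he2 : α * (1 + β * cmin) = α + β * α * cmin := by ring
      linarith [hkeyα]
  have hdom' : α' ∈ Set.Ioo 0 (cmin / (1 + β * cmin)) := by
    constructor
    · exact hα'pos
    · rw [lt_div_iff₀ hden]
      have he1 : (1 - β * α') * cmin = cmin - β * α' * cmin := by ring
      have he2 : α' * (1 + β * cmin) = α' + β * α' * cmin := by ring
      linarith [hkeyα']
  have hfeq : (fun s => -((1 - β*s) * Real.log (1 - β*s)) - (1 - β*s)*C - β*(s*Real.log s)) α'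
      = (fun s => -((1 - β*s) * Real.log (1 - β*s)) - (1 - β*s)*C - β*(s*Real.log s)) α := by
    simp only []
    rw [hED, hEκD]
    rw [hmux', hmux] at hent
    linarith [hent]
  have hαα' : α' = α := hsm.injOn hdom' hdom hfeq
  have hκ1 : κ = 1 := by
    have h1 : κ * D = 1 * D := by
      rw [hαα'] at hsumB
      rw [one_mul]
      linarith [hsumA, hsumB]
    exact mul_right_cancel₀ (ne_of_gt hDpos) h1
  have hBA : ∀ u, B u = A u := by
    intro u
    rcases lt_or_ge u m with hu | hu
    · rw [hBκ u hu, hκ1, one_mul]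
    · rcases lt_or_ge u K with huK | huK
      · rw [hBtail u hu huK, hAtail u hu huK, hαα']
      · rw [hB_def, hA_def,
          nsort_zero_of_ge hx'.1 (show Ksupp x' ≤ u by rw [hK']; omega),
          nsort_zero_of_ge hx.1 (show Ksupp x ≤ u by omega)]
  -- pointwise domination
  have hle2 : ∀ i, x' i ≤ x i := by
    intro i
    by_cases hxi : 0 < x i
    · have hv0 : (0:ℝ) ≤ x i := le_of_lt hxi
      by_cases hmv0 : 0 < gtcard x (x i)
      · set Tv : Finset (Fin n) := univ.filter (fun j => x i < x j) with hTv_def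
        have hTvcard : Tv.card = gtcard x (x i) := rfl
        have hTvpos : ∀ j ∈ Tv, 0 < x j := by
          intro j hj; rw [hTv_def, Finset.mem_filter] at hj; linarith [hj.2]
        have hTvzS : ∀ j ∈ Tv, ∀ l ∉ Tv, x l ≤ x j := by
          intro j hj l hl
          rw [hTv_def, Finset.mem_filter] at hj
          rw [hTv_def, Finset.mem_filter] at hl
          push_neg at hl
          have h2 := hl (Finset.mem_univ l)
          linarith [hj.2]
        have hTvne : Tv.Nonempty := Finset.card_pos.mp (by rw [hTvcard]; exact hmv0)
        have hKyv : Ksupp (condS x Tv) = gtcard x (x i) := by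
          rw [Ksupp_condS hTvpos hTvne, hTvcard]
        have hmvK : gtcard x (x i) < K := by
          have hsub : Tv ⊆ (univ.filter (fun j => 0 < x j)).erase i := by
            intro j hj
            rw [hTv_def, Finset.mem_filter] at hj
            rw [Finset.mem_erase, Finset.mem_filter]
            constructor
            · intro heq; rw [heq] at hj; linarith [hj.2]
            · exact ⟨Finset.mem_univ j, by linarith [hj.2]⟩
          have h1 := Finset.card_le_card hsub
          rw [Finset.card_erase_of_mem
            (by rw [Finset.mem_filter]; exact ⟨Finset.mem_univ i, hxi⟩)] at h1
          rw [hTvcard] at h1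
          have h2 : (univ.filter (fun j => 0 < x j)).card = K := rfl
          omega
        have hx'yv : BayesLE x' (condS x Tv) :=
          (hEQ _ (condS_isDist hTvpos hTvne) (by rw [hKyv]; omega)).mp
            (bayesLE_condS hx.1 hTvzS hTvpos hTvne)
        obtain ⟨hmapv, _⟩ := extract hx'yv
        obtain ⟨u, hun, hx'u, hyu⟩ := hmapv i
        have hiTv : i ∉ Tv := by
          rw [hTv_def, Finset.mem_filter]
          push_neg
          intro _
          exact le_refl (x i)
        have hy0 : condS x Tv i = 0 := by rw [condS, if_neg hiTv]
        have hu_ge : gtcard x (x i) ≤ u := by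
          by_contra hc
          push_neg at hc
          have h2 : 0 < condS x Tv i := by
            rw [hyu, nsort_pos_iff, hKyv]; exact hc
          linarith
        have hAmv : A (gtcard x (x i)) ≤ x i := by
          by_contra hc
          push_neg at hc
          have h2 := (nsort_gt_iff hv0 (gtcard x (x i))).mp hc
          omega
        rw [hx'u]
        calc nsort x' u = A u := hBA u
        _ ≤ A (gtcard x (x i)) := hAanti hu_ge
        _ ≤ x i := hAmv
      · have hA0v : A 0 ≤ x i := by
          by_contra hc
          push_neg at hc
          have h2 := (nsort_gt_iff hv0 0).mp hc
          omega
        rw [nsort_apply x' i]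
        calc nsort x' ((aperm x').symm i : ℕ) ≤ nsort x' 0 := hBanti (Nat.zero_le _)
        _ = A 0 := hBA 0
        _ ≤ x i := hA0v
    · have h1 : x i = 0 := le_antisymm (not_lt.mp hxi) (hx.1 i)
      have h2 : x' i = 0 :=
        le_antisymm (not_lt.mp (fun hc => hxi ((hsupp i).mpr hc))) (hx'.1 i)
      rw [h1, h2]
  funext i
  exact (Finset.sum_eq_sum_iff_of_le (fun j _ => hle2 j)).mp
    (by rw [hx'.2, hx.2]) i (Finset.mem_univ i)

end core

lemma m_zero_of_eq_uS {x : Fin n → ℝ} (hx : IsDist x) {S : Finset (Fin n)}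
    (hxeq : x = uS S) : gtcard x (nsort x (Ksupp x - 1)) = 0 := by
  by_contra hc
  have hKl : 1 ≤ Ksupp x := Ksupp_pos hx
  have hKn := Ksupp_le x
  have hαpos : 0 < nsort x (Ksupp x - 1) := (nsort_pos_iff x _).mpr (by omega)
  have hα : nsort x (Ksupp x - 1) = x (aperm x ⟨Ksupp x - 1, by omega⟩) := by
    have h0 := nsort_eq (aperm_antitone x) (⟨Ksupp x - 1, by omega⟩ : Fin n)
    exact h0.symm
  have huni : ∀ i : Fin n, 0 < x i → x i = ((S.card : ℝ))⁻¹ := by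
    intro i hi
    rw [hxeq] at hi ⊢
    unfold uS at hi ⊢
    split at hi
    · rw [if_pos ‹_›]
    · linarith
  have h1 : 0 < (univ.filter (fun i => nsort x (Ksupp x - 1) < x i)).card :=
    Nat.pos_of_ne_zero hc
  obtain ⟨i, hi⟩ := Finset.card_pos.mp h1
  rw [Finset.mem_filter] at hi
  have h2 : x i = ((S.card : ℝ))⁻¹ := huni i (lt_trans hαpos hi.2)
  have h3 : nsort x (Ksupp x - 1) = ((S.card : ℝ))⁻¹ := by
    rw [hα]
    exact huni _ (by rw [← hα]; exact hαpos)
  rw [h2, h3] at hi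
  exact lt_irrefl _ hi.2

end Stmt17

open Stmt17

/-- The identity is the only order-isomorphism of (Δⁿ, ⊑) which fixes every
maximal element and preserves Shannon entropy. -/
theorem stmt17 {n : ℕ} (hn : 2 ≤ n) (h : (Fin n → ℝ) → (Fin n → ℝ))
    (hmaps : ∀ x, IsDist x → IsDist (h x))
    (hsurj : ∀ y, IsDist y → ∃ x, IsDist x ∧ h x = y)
    (hinj : ∀ x y, IsDist x → IsDist y → h x = h y → x = y)
    (hiso : ∀ x y, IsDist x → IsDist y → (BayesLE x y ↔ BayesLE (h x) (h y)))
    (hmax : ∀ e, IsDist e → (∀ i, e i = 0 ∨ e i = 1) → h e = e)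
    (hent : ∀ x, IsDist x → shannonEntropy (h x) = shannonEntropy x) :
    ∀ x, IsDist x → h x = x := by
  classical
  -- point masses are fixed
  have hpm : ∀ i : Fin n, h (pm i) = pm i := fun i =>
    hmax (pm i) (pm_isDist i) (fun j => pm_zero_or_one i j)
  -- uniform distributions on sets are fixed
  have hbot : ∀ S : Finset (Fin n), S.Nonempty → h (uS S) = uS S := by
    intro S hS
    have hUd := uS_isDist hS
    have hLB : ∀ z, IsDist z → (∀ i ∈ S, BayesLE z (pm i)) → BayesLE z (uS S) := by
      intro z hz hzi
      apply bayesLE_uS hz.1 hS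
      intro i hiS j
      exact max_of_bayesLE_pm (hzi i hiS) j
    have hULB : ∀ i ∈ S, BayesLE (uS S) (pm i) := by
      intro i hiS
      apply bayesLE_pm hUd.1
      intro j
      unfold uS
      rw [if_pos hiS]
      split
      · exact le_refl _
      · positivity
    have h1 : ∀ i ∈ S, BayesLE (h (uS S)) (pm i) := by
      intro i hiS
      have h2 := (hiso (uS S) (pm i) hUd (pm_isDist i)).mp (hULB i hiS)
      rwa [hpm i] at h2
    have h2 : BayesLE (h (uS S)) (uS S) := hLB _ (hmaps _ hUd) h1
    obtain ⟨w, hwd, hw⟩ := hsurj (uS S) hUd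
    have h3 : ∀ i ∈ S, BayesLE w (pm i) := by
      intro i hiS
      apply (hiso w (pm i) hwd (pm_isDist i)).mpr
      rw [hw, hpm i]
      exact hULB i hiS
    have h4 : BayesLE w (uS S) := hLB w hwd h3
    have h5 : BayesLE (uS S) (h (uS S)) := by
      have h6 := (hiso w (uS S) hwd hUd).mp h4
      rwa [hw] at h6
    exact bayes_antisymm (hmaps _ hUd) hUd h2 h5
  -- support preservation
  have hsuppP : ∀ x, IsDist x → ∀ i, (0 < x i ↔ 0 < h x i) := by
    intro x hxd
    have hSne : (univ.filter (fun i => 0 < x i)).Nonempty :=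
      Finset.card_pos.mp (Ksupp_pos hxd)
    have hug : BayesLE (uS (univ.filter (fun i => 0 < x i))) x :=
      uS_le_of_supp_subset hxd hSne (by
        intro j hj
        rw [Finset.mem_filter] at hj
        push_neg at hj
        exact le_antisymm (hj (Finset.mem_univ j)) (hxd.1 j))
    have h1 : BayesLE (uS (univ.filter (fun i => 0 < x i))) (h x) := by
      have h2 := (hiso _ x (uS_isDist hSne) hxd).mp hug
      rwa [hbot _ hSne] at h2
    have h2 : ∀ j ∉ (univ.filter (fun i => 0 < x i)), h x j = 0 :=
      supp_subset_of_uS_le (hmaps x hxd) hSne h1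
    have hS'ne : (univ.filter (fun i => 0 < h x i)).Nonempty :=
      Finset.card_pos.mp (Ksupp_pos (hmaps x hxd))
    have hug' : BayesLE (uS (univ.filter (fun i => 0 < h x i))) (h x) :=
      uS_le_of_supp_subset (hmaps x hxd) hS'ne (by
        intro j hj
        rw [Finset.mem_filter] at hj
        push_neg at hj
        exact le_antisymm (hj (Finset.mem_univ j)) ((hmaps x hxd).1 j))
    have h3 : BayesLE (uS (univ.filter (fun i => 0 < h x i))) x := by
      apply (hiso _ x (uS_isDist hS'ne) hxd).mpr
      rwa [hbot _ hS'ne]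
    have h4 : ∀ j ∉ (univ.filter (fun i => 0 < h x i)), x j = 0 :=
      supp_subset_of_uS_le hxd hS'ne h3
    intro i
    constructor
    · intro hi
      by_contra hc
      have h5 : i ∉ (univ.filter (fun j => 0 < h x j)) := by
        rw [Finset.mem_filter]
        push_neg
        intro _
        exact not_lt.mp hc
      rw [h4 i h5] at hi
      exact lt_irrefl 0 hi
    · intro hi
      by_contra hc
      have h5 : i ∉ (univ.filter (fun j => 0 < x j)) := by
        rw [Finset.mem_filter]
        push_neg
        intro _
        exact not_lt.mp hc
      rw [h2 i h5] at hi
      exact lt_irrefl 0 hi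
  -- induction on support size
  suffices hind : ∀ k : ℕ, ∀ x : Fin n → ℝ, IsDist x → Ksupp x ≤ k → h x = x by
    intro x hxd
    exact hind (Ksupp x) x hxd le_rfl
  intro k
  induction k with
  | zero =>
    intro x hxd hK
    have := Ksupp_pos hxd
    omega
  | succ k ih =>
    intro x hxd hK
    by_cases hKk : Ksupp x ≤ k
    · exact ih x hxd hKk
    · have hKeq : Ksupp x = k + 1 := by omega
      by_cases hk0 : k = 0
      · -- point mass
        apply hmax x hxd
        have hsc : (univ.filter (fun i => 0 < x i)).card = 1 := by
          have : Ksupp x = 1 := by omega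
          exact this
        obtain ⟨j, hj⟩ := Finset.card_eq_one.mp hsc
        have hoff : ∀ i, i ≠ j → x i = 0 := by
          intro i hij
          by_contra hc
          have hpos : 0 < x i := lt_of_le_of_ne (hxd.1 i) (Ne.symm hc)
          have : i ∈ univ.filter (fun i => 0 < x i) := by
            rw [Finset.mem_filter]; exact ⟨Finset.mem_univ i, hpos⟩
          rw [hj, Finset.mem_singleton] at this
          exact hij this
        have hxj : x j = 1 := by
          have h1 := hxd.2
          rw [Finset.sum_eq_single j (fun i _ hij => hoff i hij) (fun hc => absurd (Finset.mem_univ j) hc)] at h1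
          exact h1
        intro i
        by_cases hij : i = j
        · right; rw [hij]; exact hxj
        · left; exact hoff i hij
      · -- support ≥ 2
        have hSne : (univ.filter (fun i => 0 < x i)).Nonempty :=
          Finset.card_pos.mp (Ksupp_pos hxd)
        by_cases hxu : gtcard x (nsort x (Ksupp x - 1)) = 0
        · have hxeq := eq_uS_of_m_zero hxd hxu
          rw [hxeq]
          exact hbot _ hSne
        · have hxd' := hmaps x hxd
          have hsupp2 := hsuppP x hxd
          have hm'pos : 0 < gtcard (h x) (nsort (h x) (Ksupp (h x) - 1)) := by
            by_contra hc
            push_neg at hc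
            have hm'0 : gtcard (h x) (nsort (h x) (Ksupp (h x) - 1)) = 0 := by omega
            have heq' := eq_uS_of_m_zero hxd' hm'0
            have hSeq : (univ.filter (fun i => 0 < h x i)) = (univ.filter (fun i => 0 < x i)) := by
              ext i
              simp only [Finset.mem_filter, Finset.mem_univ, true_and]
              exact (hsupp2 i).symm
            rw [hSeq] at heq'
            have hxeq2 : x = uS (univ.filter (fun i => 0 < x i)) := by
              apply hinj x _ hxd (uS_isDist hSne)
              rw [hbot _ hSne]
              exact heq'
            exact hxu (m_zero_of_eq_uS hxd hxeq2)
          have hEQ2 : ∀ y, IsDist y → Ksupp y < Ksupp x → (BayesLE x y ↔ BayesLE (h x) y) := by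
            intro y hyd hKy
            have hyfix : h y = y := ih y hyd (by omega)
            have h6 := hiso x y hxd hyd
            rwa [hyfix] at h6
          exact core hxd hxd' hsupp2 hEQ2 (hent x hxd) (Nat.pos_of_ne_zero hxu) hm'pos
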